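/- Let λ = (1+√5)/2 and λ̄ = −1/λ. For n ≥ 1 and any exponents α₀,…,α_{n−4} ∈ {0,1}, the quantity λ̄ⁿ − Σ_{i=0}^{n−4} αᵢ λ̄ⁱ lies strictly between −λ and 1. -/

import Mathlib

noncomputable def lam : ℝ := (1 + Real.sqrt 5) / 2
noncomputable def lamBar : ℝ := -1 / lam

noncomputable def aR : ℝ := lam⁻¹

lemma s5 : Real.sqrt 5 * Real.sqrt 5 = 5 := Real.mul_self_sqrt (by norm_num)
lemma s5_gt : 2 < Real.sqrt 5 := by nlinarith [s5, Real.sqrt_nonneg 5]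
lemma lam_gt_one : 1 < lam := by unfold lam; nlinarith [s5_gt]
lemma lam_pos : 0 < lam := lt_trans one_pos lam_gt_one
lemma lam_sq : lam * lam = lam + 1 := by unfold lam; nlinarith [s5]
lemma aR_pos : 0 < aR := inv_pos.mpr lam_pos
lemma lam_mul_aR : lam * aR = 1 := mul_inv_cancel₀ (ne_of_gt lam_pos)
lemma aR_lt_one : aR < 1 := by
  rw [aR]; exact inv_lt_one_of_one_lt₀ lam_gt_one
lemma aR_eq : aR = lam - 1 := by
  have h := lam_sq
  have h2 := lam_mul_aR
  nlinarith [lam_pos]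
lemma lamBar_eq : lamBar = -aR := by
  unfold lamBar aR
  field_simp
lemma aR_sq : aR * aR = 1 - aR := by
  have h := lam_sq
  have h2 := aR_eq
  nlinarith

lemma sum_upper (α : ℕ → ℝ) (hα : ∀ i, α i = 0 ∨ α i = 1) (m : ℕ) :
    ∑ i ∈ Finset.range m, α i * lamBar ^ i ≤
      lam - lam * (if Even m then aR ^ m else aR ^ (m + 1)) := by
  induction m with
  | zero => simp
  | succ m ih =>
    rw [Finset.sum_range_succ]
    have hpow : (0:ℝ) < aR ^ m := pow_pos aR_pos m
    have hαm : 0 ≤ α m ∧ α m ≤ 1 := by rcases hα m with h | h <;> simp [h]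
    rcases Nat.even_or_odd m with he | ho
    · -- m even, m+1 odd
      have h1 : lamBar ^ m = aR ^ m := by rw [lamBar_eq, he.neg_pow]
      rw [if_pos he] at ih
      rw [if_neg (by simpa using Nat.even_add_one.not.mpr (by simpa using he))]
      have h2 : aR ^ (m + 1 + 1) = aR ^ m * (aR * aR) := by ring
      have h3 : lam * (aR * aR) = lam - 1 := by
        rw [aR_sq]; have := lam_mul_aR; nlinarith
      rw [h1, h2]
      nlinarith [hαm.1, hαm.2, hpow]
    · -- m odd, m+1 even
      have h1 : lamBar ^ m = -(aR ^ m) := by rw [lamBar_eq, ho.neg_pow]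
      rw [if_neg (by simpa using ho)] at ih
      rw [if_pos (Nat.even_add_one.mpr (by simpa using ho))]
      rw [h1]
      nlinarith [hαm.1, hαm.2, hpow]

lemma sum_lower (α : ℕ → ℝ) (hα : ∀ i, α i = 0 ∨ α i = 1) (m : ℕ) :
    -1 + lam * (if Even m then aR ^ (m + 1) else aR ^ m) ≤
      ∑ i ∈ Finset.range m, α i * lamBar ^ i := by
  induction m with
  | zero =>
    simp only [Finset.range_zero, Finset.sum_empty, if_pos (Even.zero)]
    have h1 : aR ^ (0 + 1) = aR := by norm_num
    have := lam_mul_aR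
    rw [h1]; linarith
  | succ m ih =>
    rw [Finset.sum_range_succ]
    have hpow : (0:ℝ) < aR ^ m := pow_pos aR_pos m
    have hαm : 0 ≤ α m ∧ α m ≤ 1 := by rcases hα m with h | h <;> simp [h]
    rcases Nat.even_or_odd m with he | ho
    · -- m even: d m = aR^{m+1}, d (m+1) = aR^{m+1}, extra term nonneg
      have h1 : lamBar ^ m = aR ^ m := by rw [lamBar_eq, he.neg_pow]
      rw [if_pos he] at ih
      rw [if_neg (by simpa using Nat.even_add_one.not.mpr (by simpa using he))]
      rw [h1]
      nlinarith [hαm.1, hαm.2, hpow]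
    · -- m odd: d m = aR^m, d (m+1) = aR^{m+2}
      have h1 : lamBar ^ m = -(aR ^ m) := by rw [lamBar_eq, ho.neg_pow]
      rw [if_neg (by simpa using ho)] at ih
      rw [if_pos (Nat.even_add_one.mpr (by simpa using ho))]
      have h2 : aR ^ (m + 1 + 1) = aR ^ m * (aR * aR) := by ring
      have h3 : lam * (aR * aR) = lam - 1 := by
        rw [aR_sq]; have := lam_mul_aR; nlinarith
      have h4 : aR * aR ≤ 1 := by nlinarith [aR_pos, aR_lt_one]
      rw [h1, h2]
      nlinarith [hαm.1, hαm.2, hpow, aR_pos, aR_lt_one, aR_eq]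

/-- The superweight `λ̄ⁿ − Σ_{i=0}^{n−4} αᵢ λ̄ⁱ` of a standard monomial
`t₀^{α₀}⋯t_{n−4}^{α_{n−4}} v_n` lies strictly between `−λ` and `1`. -/
theorem superweight_bounds_standard_monomial (n : ℕ) (hn : 1 ≤ n)
    (α : ℕ → ℝ) (hα : ∀ i, α i = 0 ∨ α i = 1) :
    -lam < lamBar ^ n - ∑ i ∈ Finset.range (n - 3), α i * lamBar ^ i ∧
    lamBar ^ n - ∑ i ∈ Finset.range (n - 3), α i * lamBar ^ i < 1 := by
  have ha0 := aR_pos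
  have ha1 := aR_lt_one
  have hl1 := lam_gt_one
  have hla := lam_mul_aR
  have hbar := lamBar_eq
  rcases n with _ | _ | _ | m
  · omega
  · -- n = 1
    norm_num [hbar]
    constructor <;> nlinarith
  · -- n = 2
    norm_num [hbar]
    constructor <;> nlinarith [abs_of_pos ha0]
  · -- n = m + 3
    have hsub : m + 1 + 1 + 1 - 3 = m := by omega
    rw [hsub]
    have hps : aR ^ (m + 1) = aR ^ m * aR := pow_succ aR m
    have hpm : (0:ℝ) < aR ^ m := pow_pos ha0 m
    have hpm1 : (0:ℝ) < aR ^ (m + 1) := pow_pos ha0 (m + 1)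
    have hu : ∑ i ∈ Finset.range m, α i * lamBar ^ i ≤ lam - lam * aR ^ (m + 1) := by
      refine le_trans (sum_upper α hα m) ?_
      split_ifs with h
      · nlinarith
      · exact le_refl _
    have hlo : -1 + lam * aR ^ (m + 1) ≤ ∑ i ∈ Finset.range m, α i * lamBar ^ i := by
      refine le_trans ?_ (sum_lower α hα m)
      split_ifs with h
      · exact le_refl _
      · nlinarith
    have habs : |lamBar ^ (m + 1 + 1 + 1)| = aR ^ (m + 1 + 1 + 1) := by
      rw [abs_pow, hbar, abs_neg, abs_of_pos ha0]
    obtain ⟨hb1, hb2⟩ := abs_le.mp habs.le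
    have hps3 : aR ^ (m + 1 + 1 + 1) = aR ^ (m + 1) * (aR * aR) := by ring
    have hsq := aR_sq
    constructor
    · nlinarith
    · nlinarith
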